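/- Suppose |F| ≥ 3 or n ≥ 4. Let A_1 = (p_1, H_1) and A_2 = (p_2, H_2) be distinct point-hyperplane anti-flags that are not 4-adjacent. Then for every hyperplane H with H ≠ H_1 and H ≠ H_2 there exists an anti-flag (p'', H'') that is 4-adjacent to both A_1 and A_2 and satisfies p'' ⊆ H. -/

import Mathlib

/-- A point-hyperplane anti-flag of `PG(n-1,F)`: a pair `(p, H)` where `p` is a point
(1-dimensional subspace of `F^n`), `H` is a hyperplane ((n-1)-dimensional subspace),
and `p` is not contained in `H`. -/
structure AntiFlag (F : Type*) [Field F] (n : ℕ) where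
  pt : Submodule F (Fin n → F)
  hyp : Submodule F (Fin n → F)
  pt_rank : Module.finrank F pt = 1
  hyp_rank : Module.finrank F hyp = n - 1
  not_incident : ¬ pt ≤ hyp

variable {F : Type*} [Field F] {n : ℕ}

/-- `A ~₁ B` : for some `j`, `p_j ⊆ H_{3-j}` and `p_{3-j} ⊄ H_j`. -/
def adj1 (A B : AntiFlag F n) : Prop :=
  A ≠ B ∧ ((A.pt ≤ B.hyp ∧ ¬ B.pt ≤ A.hyp) ∨ (B.pt ≤ A.hyp ∧ ¬ A.pt ≤ B.hyp))

/-- `A ~₂ B` : `p_1 ⊆ H_2` and `p_2 ⊆ H_1`. -/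
def adj2 (A B : AntiFlag F n) : Prop :=
  A ≠ B ∧ A.pt ≤ B.hyp ∧ B.pt ≤ A.hyp

/-- `A ~₃ B` : `p_1 = p_2` or `H_1 = H_2`. -/
def adj3 (A B : AntiFlag F n) : Prop :=
  A ≠ B ∧ (A.pt = B.pt ∨ A.hyp = B.hyp)

/-- `A ~₄ B` : `p_1 ≠ p_2`, `H_1 ≠ H_2`, `p_1 ⊄ H_2` and `p_2 ⊄ H_1`. -/
def adj4 (A B : AntiFlag F n) : Prop :=
  A ≠ B ∧ A.pt ≠ B.pt ∧ A.hyp ≠ B.hyp ∧ ¬ A.pt ≤ B.hyp ∧ ¬ B.pt ≤ A.hyp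

/-- `𝒳^{~ᵢ}` : the set of anti-flags `i`-adjacent to every anti-flag of `𝒳`. -/
def perpSet (adj : AntiFlag F n → AntiFlag F n → Prop) (X : Set (AntiFlag F n)) :
    Set (AntiFlag F n) := {B | ∀ A ∈ X, adj A B}

set_option linter.unusedSectionVars false
set_option linter.unusedVariables false
set_option maxHeartbeats 1000000

namespace Stmt5Aux

open Module Submodule

section General
variable {F : Type*} [Field F] {V : Type*} [AddCommGroup V] [Module F V]

lemma exists_ne_zero_ne_one (h : 3 ≤ Cardinal.mk F) : ∃ c : F, c ≠ 0 ∧ c ≠ 1 :=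
  Cardinal.three_le h 0 1

lemma avoid2 {U W1 W2 : Submodule F V} (h1 : ¬ U ≤ W1) (h2 : ¬ U ≤ W2) :
    ∃ v ∈ U, v ∉ W1 ∧ v ∉ W2 := by
  by_cases h12 : U ⊓ W1 ≤ W2
  · obtain ⟨v, hvU, hv2⟩ := SetLike.not_le_iff_exists.1 h2
    exact ⟨v, hvU, fun hv1 => hv2 (h12 ⟨hvU, hv1⟩), hv2⟩
  · by_cases h21 : U ⊓ W2 ≤ W1
    · obtain ⟨v, hvU, hv1⟩ := SetLike.not_le_iff_exists.1 h1
      exact ⟨v, hvU, hv1, fun hv2 => hv1 (h21 ⟨hvU, hv2⟩)⟩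
    · obtain ⟨a, haUW, ha2⟩ := SetLike.not_le_iff_exists.1 h12
      obtain ⟨b, hbUW, hb1⟩ := SetLike.not_le_iff_exists.1 h21
      refine ⟨a + b, add_mem haUW.1 hbUW.1, fun h => hb1 ?_, fun h => ha2 ?_⟩
      · have := sub_mem h haUW.2
        simpa using this
      · have := sub_mem h hbUW.2
        simpa using this

lemma avoid3 {U W1 W2 W3 : Submodule F V} (hc : ∃ c : F, c ≠ 0 ∧ c ≠ 1)
    (h1 : ¬ U ≤ W1) (h2 : ¬ U ≤ W2) (h3 : ¬ U ≤ W3) :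
    ∃ v ∈ U, v ∉ W1 ∧ v ∉ W2 ∧ v ∉ W3 := by
  obtain ⟨c, hc0, hc1⟩ := hc
  obtain ⟨a, haU, ha1, ha2⟩ := avoid2 h1 h2
  by_cases ha3 : a ∈ W3
  · obtain ⟨b, hbU, hb3⟩ := SetLike.not_le_iff_exists.1 h3
    have key : ∀ (W : Submodule F V), a ∉ W → ∀ s t : F, s ≠ t →
        b + s • a ∈ W → b + t • a ∈ W → False := by
      intro W haW s t hst hs ht
      have hsub : (s - t) • a ∈ W := by
        have := sub_mem hs ht
        simpa [sub_smul] using this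
      have := W.smul_mem (s - t)⁻¹ hsub
      rw [← mul_smul, inv_mul_cancel₀ (sub_ne_zero.2 hst), one_smul] at this
      exact haW this
    have hW3 : ∀ t : F, b + t • a ∉ W3 := fun t h =>
      hb3 (by simpa using sub_mem h (W3.smul_mem t ha3))
    have hmem : ∀ t : F, b + t • a ∈ U := fun t => add_mem hbU (U.smul_mem t haU)
    by_cases h01 : b + (0 : F) • a ∈ W1
    · by_cases h02 : b + (1 : F) • a ∈ W2
      · exact ⟨b + c • a, hmem c, fun h => key W1 ha1 0 c (Ne.symm hc0) h01 h,
          fun h => key W2 ha2 1 c (Ne.symm hc1) h02 h, hW3 c⟩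
      · exact ⟨b + (1 : F) • a, hmem 1, fun h => key W1 ha1 0 1 zero_ne_one h01 h, h02, hW3 1⟩
    · by_cases h02 : b + (0 : F) • a ∈ W2
      · by_cases h11 : b + (1 : F) • a ∈ W1
        · exact ⟨b + c • a, hmem c, fun h => key W1 ha1 1 c (Ne.symm hc1) h11 h,
            fun h => key W2 ha2 0 c (Ne.symm hc0) h02 h, hW3 c⟩
        · exact ⟨b + (1 : F) • a, hmem 1, h11, fun h => key W2 ha2 0 1 zero_ne_one h02 h, hW3 1⟩
      · exact ⟨b + (0 : F) • a, hmem 0, h01, h02, hW3 0⟩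
  · exact ⟨a, haU, ha1, ha2, ha3⟩

end General

section FinDim
variable {F : Type*} [Field F] {V : Type*} [AddCommGroup V] [Module F V]
  [FiniteDimensional F V]

lemma finrank_sup_le' (A B : Submodule F V) :
    finrank F ↥(A ⊔ B) ≤ finrank F A + finrank F B := by
  have := Submodule.finrank_sup_add_finrank_inf_eq A B
  omega

lemma exists_span_rep {T : Submodule F V} (hT : finrank F T = 1) :
    ∃ v : V, v ≠ 0 ∧ T = Submodule.span F {v} := by
  have hTb : T ≠ ⊥ := by
    intro h
    rw [h, finrank_bot] at hT
    omega
  obtain ⟨v, hvT, hv0⟩ := T.ne_bot_iff.1 hTb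
  have hle : Submodule.span F {v} ≤ T := (span_singleton_le_iff_mem v T).2 hvT
  exact ⟨v, hv0, (Submodule.eq_of_le_of_finrank_eq hle
    (by rw [finrank_span_singleton hv0, hT])).symm⟩

lemma mem_rank_one_le {p X : Submodule F V} (hp : finrank F p = 1) {t : V}
    (ht : t ∈ p) (ht0 : t ≠ 0) (htX : t ∈ X) : p ≤ X := by
  have h1 : Submodule.span F {t} = p :=
    Submodule.eq_of_le_of_finrank_eq ((span_singleton_le_iff_mem t p).2 ht)
      (by rw [finrank_span_singleton ht0, hp])
  rw [← h1]
  exact (span_singleton_le_iff_mem t X).2 htX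

lemma span_singleton_eq_of_mem {u v : V} (hu : u ≠ 0) (h : u ∈ Submodule.span F {v}) :
    Submodule.span F {u} = Submodule.span F {v} := by
  have hv : v ≠ 0 := by
    rintro rfl
    rw [Submodule.span_zero_singleton, Submodule.mem_bot] at h
    exact hu h
  exact Submodule.eq_of_le_of_finrank_eq ((span_singleton_le_iff_mem _ _).2 h)
    (by rw [finrank_span_singleton hu, finrank_span_singleton hv])

lemma exists_dual_eq_one {S : Submodule F V} {x : V} (hx : x ∉ S) :
    ∃ f : Module.Dual F V, f x = 1 ∧ ∀ s ∈ S, f s = 0 := by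
  obtain ⟨f, hfx, hfS⟩ := S.exists_dual_map_eq_bot_of_notMem hx inferInstance
  refine ⟨(f x)⁻¹ • f, by simp [inv_mul_cancel₀ hfx], fun s hs => ?_⟩
  have h0 : f s = 0 := by
    have : f s ∈ S.map f := ⟨s, hs, rfl⟩
    rw [hfS] at this
    simpa using this
  simp [h0]

lemma finrank_ker_of_ne_zero {φ : Module.Dual F V} {x : V} (hx : φ x ≠ 0) :
    finrank F (LinearMap.ker φ) = finrank F V - 1 := by
  have hrange : LinearMap.range φ = ⊤ :=
    LinearMap.range_eq_top.2 fun c => ⟨(c / φ x) • x, by rw [map_smul, smul_eq_mul, div_mul_cancel₀ _ hx]⟩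
  have h := LinearMap.finrank_range_add_finrank_ker φ
  rw [hrange, finrank_top, Module.finrank_self] at h
  omega

lemma ker_eq_imp_mem_span {φ ψ : Module.Dual F V} (hψ : ψ ≠ 0)
    (h : LinearMap.ker φ = LinearMap.ker ψ) : φ ∈ Submodule.span F {ψ} := by
  obtain ⟨z, hz⟩ : ∃ z, ψ z ≠ 0 := by
    by_contra hz
    push_neg at hz
    exact hψ (LinearMap.ext fun v => by simp [hz])
  refine Submodule.mem_span_singleton.2 ⟨φ z / ψ z, ?_⟩
  apply LinearMap.ext
  intro v
  have hv : v - (ψ v / ψ z) • z ∈ LinearMap.ker ψ := by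
    simp [LinearMap.mem_ker, map_sub, map_smul, div_mul_cancel₀ _ hz]
  rw [← h, LinearMap.mem_ker, map_sub, map_smul, sub_eq_zero, smul_eq_mul] at hv
  simp only [LinearMap.smul_apply, smul_eq_mul]
  rw [hv]
  field_simp

lemma hyperplane_exists_ker {W : Submodule F V}
    (hW : finrank F W = finrank F V - 1) (hV : 1 ≤ finrank F V) :
    ∃ ψ : Module.Dual F V, ψ ≠ 0 ∧ LinearMap.ker ψ = W := by
  have hWne : W ≠ ⊤ := by
    intro h
    rw [h, finrank_top] at hW
    omega
  obtain ⟨x, hx⟩ : ∃ x, x ∉ W := by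
    by_contra h
    push_neg at h
    exact hWne (eq_top_iff.2 fun v _ => h v)
  obtain ⟨f, hfx, hfW⟩ := exists_dual_eq_one hx
  have hfne : f ≠ 0 := fun h => by simp [h] at hfx
  have hker : W ≤ LinearMap.ker f := fun s hs => LinearMap.mem_ker.2 (hfW s hs)
  have hkerrank : finrank F (LinearMap.ker f) = finrank F V - 1 :=
    finrank_ker_of_ne_zero (x := x) (by rw [hfx]; exact one_ne_zero)
  exact ⟨f, hfne, (Submodule.eq_of_le_of_finrank_eq hker (by rw [hW, hkerrank])).symm⟩

lemma finrank_dualAnnihilator (S : Submodule F V) :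
    finrank F S.dualAnnihilator = finrank F V - finrank F S := by
  have h1 : finrank F (V ⧸ S) = finrank F S.dualAnnihilator :=
    (Subspace.quotEquivAnnihilator S).finrank_eq
  have h2 := S.finrank_quotient_add_finrank
  have h3 := S.finrank_le
  omega

lemma span_eval_inj {u : V} {ψ a b : Module.Dual F V} (hau : a u = 1) (hbu : b u = 1)
    (ha : a ∈ Submodule.span F {ψ}) (hb : b ∈ Submodule.span F {ψ}) : a = b := by
  obtain ⟨s, hs⟩ := Submodule.mem_span_singleton.1 ha
  obtain ⟨t, ht⟩ := Submodule.mem_span_singleton.1 hb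
  rw [← hs] at hau
  rw [← ht] at hbu
  simp only [LinearMap.smul_apply, smul_eq_mul] at hau hbu
  have hψu : ψ u ≠ 0 := fun h => by rw [h, mul_zero] at hau; exact one_ne_zero hau.symm
  have hst : s = t := mul_right_cancel₀ hψu (hau.trans hbu.symm)
  rw [← hs, ← ht, hst]

lemma eval_zero_not_mem_span {u : V} {ψ a : Module.Dual F V} (hau : a u = 1)
    (hψu : ψ u = 0) : a ∉ Submodule.span F {ψ} := by
  intro h
  obtain ⟨s, hs⟩ := Submodule.mem_span_singleton.1 h
  rw [← hs] at hau
  simp [hψu] at hau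

lemma pick3 {u : V} {c1 c2 c3 ψ1 ψ2 : Module.Dual F V}
    (h1 : c1 u = 1) (h2 : c2 u = 1) (h3 : c3 u = 1)
    (d12 : c1 ≠ c2) (d13 : c1 ≠ c3) (d23 : c2 ≠ c3) :
    ∃ φ, (φ = c1 ∨ φ = c2 ∨ φ = c3) ∧ φ ∉ Submodule.span F {ψ1} ∧
      φ ∉ Submodule.span F {ψ2} := by
  by_cases m1 : c1 ∈ Submodule.span F {ψ1}
  · by_cases m2 : c2 ∈ Submodule.span F {ψ2}
    · exact ⟨c3, Or.inr (Or.inr rfl), fun h => d13 (span_eval_inj h1 h3 m1 h),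
        fun h => d23 (span_eval_inj h2 h3 m2 h)⟩
    · exact ⟨c2, Or.inr (Or.inl rfl), fun h => d12 (span_eval_inj h1 h2 m1 h), m2⟩
  · by_cases m1' : c1 ∈ Submodule.span F {ψ2}
    · by_cases m2 : c2 ∈ Submodule.span F {ψ1}
      · exact ⟨c3, Or.inr (Or.inr rfl), fun h => d23 (span_eval_inj h2 h3 m2 h),
          fun h => d13 (span_eval_inj h1 h3 m1' h)⟩
      · exact ⟨c2, Or.inr (Or.inl rfl), m2, fun h => d12 (span_eval_inj h1 h2 m1' h)⟩
    · exact ⟨c1, Or.inl rfl, m1, m1'⟩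

lemma finrank_span_singleton_le (v : V) : finrank F (Submodule.span F {v}) ≤ 1 := by
  by_cases hv : v = 0
  · rw [hv, Submodule.span_zero_singleton, finrank_bot]; omega
  · rw [finrank_span_singleton hv]

lemma finrank_span_pair_le (u v : V) :
    finrank F (Submodule.span F {u, v}) ≤ 2 := by
  rw [show ({u, v} : Set V) = insert u {v} from rfl, Submodule.span_insert]
  have h := Submodule.finrank_sup_add_finrank_inf_eq (Submodule.span F {u}) (Submodule.span F {v})
  have h1 := finrank_span_singleton_le (F := F) u
  have h2 := finrank_span_singleton_le (F := F) v
  omega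

lemma finrank_span_triple_le (u v w : V) :
    finrank F (Submodule.span F {u, v, w}) ≤ 3 := by
  rw [show ({u, v, w} : Set V) = insert u {v, w} from rfl, Submodule.span_insert]
  have h := Submodule.finrank_sup_add_finrank_inf_eq (Submodule.span F {u})
    (Submodule.span F {v, w})
  have h1 := finrank_span_singleton_le (F := F) u
  have h2 := finrank_span_pair_le (F := F) v w
  omega

-- pick a nonzero element of a submodule with finrank ≥ 1

lemma exists_ne_zero_of_finrank_pos {T : Submodule F V} (h : 1 ≤ finrank F T) :
    ∃ t ∈ T, t ≠ 0 := by
  have : T ≠ ⊥ := by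
    intro hb
    rw [hb, finrank_bot] at h
    omega
  exact T.ne_bot_iff.1 this

lemma exists_indep_pair_of_finrank_two {T : Submodule F V} (h : 2 ≤ finrank F T) :
    ∃ t1 ∈ T, ∃ t2 ∈ T, t1 ≠ 0 ∧ t2 ∉ Submodule.span F {t1} := by
  obtain ⟨t1, ht1T, ht10⟩ := exists_ne_zero_of_finrank_pos (T := T) (by omega)
  have : ¬ T ≤ Submodule.span F {t1} := by
    intro hle
    have := Submodule.finrank_mono hle
    have := finrank_span_singleton_le (F := F) t1
    omega
  obtain ⟨t2, ht2T, ht2⟩ := SetLike.not_le_iff_exists.1 this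
  exact ⟨t1, ht1T, t2, ht2T, ht10, ht2⟩

lemma two_offsets {t1 : V} (ht10 : t1 ≠ 0) {c : F} (hc0 : c ≠ 0) (hc1 : c ≠ 1) :
    c • t1 ≠ 0 ∧ c • t1 ≠ t1 := by
  refine ⟨smul_ne_zero hc0 ht10, fun h => ?_⟩
  have h0 : (c - 1) • t1 = 0 := by rw [sub_smul, one_smul, h, sub_self]
  rcases smul_eq_zero.1 h0 with h' | h'
  · exact hc1 (sub_eq_zero.1 h')
  · exact ht10 h'

lemma step2c {v1 w : V} (ψ1 ψ2 : Module.Dual F V)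
    (h1 : v1 ∉ Submodule.span F {w}) (h2 : w ∉ Submodule.span F {v1})
    (hroom : (∃ c : F, c ≠ 0 ∧ c ≠ 1) ∨ 4 ≤ finrank F V) (hn : 3 ≤ finrank F V) :
    ∃ φ : Module.Dual F V, φ v1 ≠ 0 ∧ φ w ≠ 0 ∧ φ ∉ Submodule.span F {ψ1} ∧
      φ ∉ Submodule.span F {ψ2} := by
  obtain ⟨f1, hf1, hf1z⟩ := exists_dual_eq_one h1
  obtain ⟨f3, hf3, hf3z⟩ := exists_dual_eq_one h2
  have hf1w : f1 w = 0 := hf1z w (Submodule.mem_span_singleton_self w)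
  have hf3v1 : f3 v1 = 0 := hf3z v1 (Submodule.mem_span_singleton_self v1)
  set T := (Submodule.span F {v1, w}).dualAnnihilator with hTdef
  have hTrank : 1 ≤ finrank F T := by
    rw [hTdef, finrank_dualAnnihilator]
    have := finrank_span_pair_le (F := F) v1 w
    omega
  have hTkill : ∀ e ∈ T, e v1 = 0 ∧ e w = 0 := by
    intro e he
    rw [hTdef, Submodule.mem_dualAnnihilator] at he
    exact ⟨he v1 (Submodule.subset_span (by simp)), he w (Submodule.subset_span (by simp))⟩
  obtain ⟨e2, he2T, e3, he3T, he20, he30, he23⟩ :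
      ∃ e2 ∈ T, ∃ e3 ∈ T, e2 ≠ 0 ∧ e3 ≠ 0 ∧ e2 ≠ e3 := by
    rcases hroom with ⟨c, hc0, hc1⟩ | h4
    · obtain ⟨t1, ht1T, ht10⟩ := exists_ne_zero_of_finrank_pos hTrank
      obtain ⟨hcz, hct⟩ := two_offsets ht10 hc0 hc1
      exact ⟨t1, ht1T, c • t1, T.smul_mem c ht1T, ht10, hcz, fun h => hct h.symm⟩
    · have hT2 : 2 ≤ finrank F T := by
        rw [hTdef, finrank_dualAnnihilator]
        have := finrank_span_pair_le (F := F) v1 w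
        omega
      obtain ⟨t1, ht1T, t2, ht2T, ht10, ht2s⟩ := exists_indep_pair_of_finrank_two hT2
      refine ⟨t1, ht1T, t2, ht2T, ht10, ?_, ?_⟩
      · intro h
        exact ht2s (h ▸ Submodule.zero_mem _)
      · intro h
        exact ht2s (h ▸ Submodule.mem_span_singleton_self t1)
  set φ0 := f1 + f3 with hφ0
  have hval : ∀ e ∈ T, (φ0 + e) v1 = 1 ∧ (φ0 + e) w = 1 := by
    intro e he
    obtain ⟨he1, he2⟩ := hTkill e he
    constructor
    · simp [hφ0, hf1, hf3v1, he1]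
    · simp [hφ0, hf1w, hf3, he2]
  have hv0 := hval 0 (Submodule.zero_mem T)
  have hv2 := hval e2 he2T
  have hv3 := hval e3 he3T
  simp only [add_zero] at hv0
  obtain ⟨φ, hφmem, hs1, hs2⟩ := pick3 (ψ1 := ψ1) (ψ2 := ψ2) hv0.1 hv2.1 hv3.1
    (fun h => he20 (by rwa [left_eq_add] at h))
    (fun h => he30 (by rwa [left_eq_add] at h))
    (fun h => he23 (add_left_cancel h))
  have hφv : φ v1 = 1 ∧ φ w = 1 := by
    rcases hφmem with rfl | rfl | rfl
    · exact hv0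
    · exact hv2
    · exact hv3
  exact ⟨φ, by rw [hφv.1]; exact one_ne_zero, by rw [hφv.2]; exact one_ne_zero, hs1, hs2⟩

lemma step2b {v1 v2 w : V} {a b : F} (ψ1 ψ2 : Module.Dual F V)
    (hw : w = a • v1 + b • v2) (ha : a ≠ 0) (hb : b ≠ 0)
    (h12 : v1 ∉ Submodule.span F {v2}) (h21 : v2 ∉ Submodule.span F {v1})
    (hcF : ∃ c : F, c ≠ 0 ∧ c ≠ 1) (hn : 3 ≤ finrank F V) :
    ∃ φ : Module.Dual F V, φ v1 ≠ 0 ∧ φ v2 ≠ 0 ∧ φ w ≠ 0 ∧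
      φ ∉ Submodule.span F {ψ1} ∧ φ ∉ Submodule.span F {ψ2} := by
  obtain ⟨c, hc0, hc1⟩ := hcF
  obtain ⟨f1, hf1, hf1z⟩ := exists_dual_eq_one h12
  obtain ⟨f2, hf2, hf2z⟩ := exists_dual_eq_one h21
  have hf1v2 : f1 v2 = 0 := hf1z v2 (Submodule.mem_span_singleton_self v2)
  have hf2v1 : f2 v1 = 0 := hf2z v1 (Submodule.mem_span_singleton_self v1)
  obtain ⟨β, hβ0, hβw⟩ : ∃ β : F, β ≠ 0 ∧ a + b * β ≠ 0 := by
    by_cases h : a + b * 1 = 0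
    · refine ⟨c, hc0, fun hcc => hc1 ?_⟩
      have hd : b * (c - 1) = (a + b * c) - (a + b * 1) := by ring
      rw [hcc, h, sub_zero] at hd
      rcases mul_eq_zero.1 hd with h' | h'
      · exact absurd h' hb
      · exact sub_eq_zero.1 h'
    · exact ⟨1, one_ne_zero, h⟩
  set T := (Submodule.span F {v1, v2}).dualAnnihilator with hTdef
  have hTrank : 1 ≤ finrank F T := by
    rw [hTdef, finrank_dualAnnihilator]
    have := finrank_span_pair_le (F := F) v1 v2
    omega
  have hTkill : ∀ e ∈ T, e v1 = 0 ∧ e v2 = 0 ∧ e w = 0 := by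
    intro e he
    rw [hTdef, Submodule.mem_dualAnnihilator] at he
    have h1 := he v1 (Submodule.subset_span (by simp))
    have h2 := he v2 (Submodule.subset_span (by simp))
    exact ⟨h1, h2, by rw [hw, map_add, map_smul, map_smul, h1, h2, smul_zero, smul_zero, add_zero]⟩
  obtain ⟨t1, ht1T, ht10⟩ := exists_ne_zero_of_finrank_pos hTrank
  obtain ⟨hcz, hct⟩ := two_offsets ht10 hc0 hc1
  set φ0 := f1 + β • f2 with hφ0
  have hval : ∀ e ∈ T, (φ0 + e) v1 = 1 ∧ (φ0 + e) v2 = β ∧ (φ0 + e) w = a + b * β := by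
    intro e he
    obtain ⟨he1, he2, he3⟩ := hTkill e he
    have hf1w : f1 w = a := by
      rw [hw, map_add, map_smul, map_smul, hf1, hf1v2, smul_zero, add_zero, smul_eq_mul, mul_one]
    have hf2w : f2 w = b := by
      rw [hw, map_add, map_smul, map_smul, hf2, hf2v1, smul_zero, zero_add, smul_eq_mul, mul_one]
    refine ⟨?_, ?_, ?_⟩
    · simp [hφ0, hf1, hf2v1, he1]
    · simp [hφ0, hf1v2, hf2, he2]
    · simp [hφ0, hf1w, hf2w, he3]
      ring
  have hv0 := hval 0 (Submodule.zero_mem T)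
  have hv2 := hval t1 ht1T
  have hv3 := hval (c • t1) (T.smul_mem c ht1T)
  simp only [add_zero] at hv0
  obtain ⟨φ, hφmem, hs1, hs2⟩ := pick3 (ψ1 := ψ1) (ψ2 := ψ2) hv0.1 hv2.1 hv3.1
    (fun h => ht10 (by rwa [left_eq_add] at h))
    (fun h => hcz (by rwa [left_eq_add] at h))
    (fun h => hct (add_left_cancel h).symm)
  have hφv : φ v1 = 1 ∧ φ v2 = β ∧ φ w = a + b * β := by
    rcases hφmem with rfl | rfl | rfl
    · exact hv0
    · exact hv2
    · exact hv3
  exact ⟨φ, by rw [hφv.1]; exact one_ne_zero, by rw [hφv.2.1]; exact hβ0,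
    by rw [hφv.2.2]; exact hβw, hs1, hs2⟩

lemma step2a {v1 v2 w : V} {ψ1 ψ2 : Module.Dual F V}
    (hw3 : w ∉ Submodule.span F {v1, v2})
    (h1 : v1 ∉ Submodule.span F {v2, w}) (h2 : v2 ∉ Submodule.span F {v1, w})
    (hbad : (∃ c : F, c ≠ 0 ∧ c ≠ 1) ∨
      (4 ≤ finrank F V ∧ (Submodule.span F {ψ1} = Submodule.span F {ψ2} ∨
        ψ2 v1 = 0 ∨ ψ1 v2 = 0))) :
    ∃ φ : Module.Dual F V, φ v1 ≠ 0 ∧ φ v2 ≠ 0 ∧ φ w ≠ 0 ∧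
      φ ∉ Submodule.span F {ψ1} ∧ φ ∉ Submodule.span F {ψ2} := by
  obtain ⟨f1, hf1, hf1z⟩ := exists_dual_eq_one h1
  obtain ⟨f2, hf2, hf2z⟩ := exists_dual_eq_one h2
  obtain ⟨f3, hf3, hf3z⟩ := exists_dual_eq_one hw3
  have hf1v2 : f1 v2 = 0 := hf1z v2 (Submodule.subset_span (by simp))
  have hf1w : f1 w = 0 := hf1z w (Submodule.subset_span (by simp))
  have hf2v1 : f2 v1 = 0 := hf2z v1 (Submodule.subset_span (by simp))
  have hf2w : f2 w = 0 := hf2z w (Submodule.subset_span (by simp))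
  have hf3v1 : f3 v1 = 0 := hf3z v1 (Submodule.subset_span (by simp))
  have hf3v2 : f3 v2 = 0 := hf3z v2 (Submodule.subset_span (by simp))
  rcases hbad with ⟨c, hc0, hc1⟩ | ⟨hn4, hsp⟩
  · -- three candidates with varying target values
    set cA := f1 + f2 + f3 with hcA
    set cB := f1 + f2 + c • f3 with hcB
    set cC := f1 + c • f2 + f3 with hcC
    have hA : cA v1 = 1 ∧ cA v2 = 1 ∧ cA w = 1 := by
      refine ⟨?_, ?_, ?_⟩ <;> simp [hcA, hf1, hf2, hf3, hf1v2, hf1w, hf2v1, hf2w, hf3v1, hf3v2]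
    have hB : cB v1 = 1 ∧ cB v2 = 1 ∧ cB w = c := by
      refine ⟨?_, ?_, ?_⟩ <;> simp [hcB, hf1, hf2, hf3, hf1v2, hf1w, hf2v1, hf2w, hf3v1, hf3v2]
    have hC : cC v1 = 1 ∧ cC v2 = c ∧ cC w = 1 := by
      refine ⟨?_, ?_, ?_⟩ <;> simp [hcC, hf1, hf2, hf3, hf1v2, hf1w, hf2v1, hf2w, hf3v1, hf3v2]
    obtain ⟨φ, hφmem, hs1, hs2⟩ := pick3 (ψ1 := ψ1) (ψ2 := ψ2) hA.1 hB.1 hC.1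
      (fun h => hc1 (by rw [h] at hA; rw [hA.2.2] at hB; exact hB.2.2.symm))
      (fun h => hc1 (by rw [h] at hA; rw [hA.2.1] at hC; exact hC.2.1.symm))
      (fun h => hc1 (by rw [h] at hB; rw [hB.2.1] at hC; exact hC.2.1.symm))
    rcases hφmem with h | h | h <;> rw [h] at hs1 hs2
    · exact ⟨cA, by rw [hA.1]; exact one_ne_zero, by rw [hA.2.1]; exact one_ne_zero,
        by rw [hA.2.2]; exact one_ne_zero, hs1, hs2⟩
    · exact ⟨cB, by rw [hB.1]; exact one_ne_zero, by rw [hB.2.1]; exact one_ne_zero,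
        by rw [hB.2.2]; exact hc0, hs1, hs2⟩
    · exact ⟨cC, by rw [hC.1]; exact one_ne_zero, by rw [hC.2.1]; exact hc0,
        by rw [hC.2.2]; exact one_ne_zero, hs1, hs2⟩
  · -- two candidates, using the structural information
    set T := (Submodule.span F {v1, v2, w}).dualAnnihilator with hTdef
    have hTrank : 1 ≤ finrank F T := by
      rw [hTdef, finrank_dualAnnihilator]
      have := finrank_span_triple_le (F := F) v1 v2 w
      omega
    obtain ⟨t1, ht1T, ht10⟩ := exists_ne_zero_of_finrank_pos hTrank
    have hTkill : t1 v1 = 0 ∧ t1 v2 = 0 ∧ t1 w = 0 := by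
      rw [hTdef, Submodule.mem_dualAnnihilator] at ht1T
      exact ⟨ht1T v1 (Submodule.subset_span (by simp)),
        ht1T v2 (Submodule.subset_span (by simp)),
        ht1T w (Submodule.subset_span (by simp))⟩
    set cA := f1 + f2 + f3 with hcA
    set cB := cA + t1 with hcB
    have hA : cA v1 = 1 ∧ cA v2 = 1 ∧ cA w = 1 := by
      refine ⟨?_, ?_, ?_⟩ <;> simp [hcA, hf1, hf2, hf3, hf1v2, hf1w, hf2v1, hf2w, hf3v1, hf3v2]
    have hB : cB v1 = 1 ∧ cB v2 = 1 ∧ cB w = 1 := by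
      refine ⟨?_, ?_, ?_⟩ <;>
        simp [hcB, LinearMap.add_apply, hA.1, hA.2.1, hA.2.2, hTkill.1, hTkill.2.1, hTkill.2.2]
    have hAB : cA ≠ cB := fun h => ht10 (by rw [hcB] at h; rwa [left_eq_add] at h)
    have hgoal : ∃ φ, (φ = cA ∨ φ = cB) ∧ φ ∉ Submodule.span F {ψ1} ∧
        φ ∉ Submodule.span F {ψ2} := by
      rcases hsp with hspan | hψ2v1 | hψ1v2
      · by_cases mA : cA ∈ Submodule.span F {ψ1}
        · refine ⟨cB, Or.inr rfl, fun h => hAB (span_eval_inj hA.1 hB.1 mA h), ?_⟩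
          rw [← hspan]
          exact fun h => hAB (span_eval_inj hA.1 hB.1 mA h)
        · exact ⟨cA, Or.inl rfl, mA, by rw [← hspan]; exact mA⟩
      · have hno : ∀ φ : Module.Dual F V, φ v1 = 1 → φ ∉ Submodule.span F {ψ2} :=
          fun φ hφ => eval_zero_not_mem_span hφ hψ2v1
        by_cases mA : cA ∈ Submodule.span F {ψ1}
        · exact ⟨cB, Or.inr rfl, fun h => hAB (span_eval_inj hA.1 hB.1 mA h), hno cB hB.1⟩
        · exact ⟨cA, Or.inl rfl, mA, hno cA hA.1⟩
      · have hno : ∀ φ : Module.Dual F V, φ v2 = 1 → φ ∉ Submodule.span F {ψ1} :=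
          fun φ hφ => eval_zero_not_mem_span hφ hψ1v2
        by_cases mA : cA ∈ Submodule.span F {ψ2}
        · exact ⟨cB, Or.inr rfl, hno cB hB.2.1, fun h => hAB (span_eval_inj hA.1 hB.1 mA h)⟩
        · exact ⟨cA, Or.inl rfl, hno cA hA.2.1, mA⟩
    obtain ⟨φ, hφmem, hs1, hs2⟩ := hgoal
    rcases hφmem with h | h <;> rw [h] at hs1 hs2
    · exact ⟨cA, by rw [hA.1]; exact one_ne_zero, by rw [hA.2.1]; exact one_ne_zero,
        by rw [hA.2.2]; exact one_ne_zero, hs1, hs2⟩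
    · exact ⟨cB, by rw [hB.1]; exact one_ne_zero, by rw [hB.2.1]; exact one_ne_zero,
        by rw [hB.2.2]; exact one_ne_zero, hs1, hs2⟩

end FinDim

end Stmt5Aux

namespace Stmt5Aux

open Module Submodule

variable {F : Type*} [Field F] {n : ℕ}

lemma finrank_fun (F : Type*) [Field F] (n : ℕ) : finrank F (Fin n → F) = n := by
  simp [Module.finrank_pi]

lemma not_le_of_rank_hyper {W W' : Submodule F (Fin n → F)} (hn : 1 ≤ n)
    (hW : finrank F W = n - 1) (hW' : finrank F W' = n - 1) (hne : W ≠ W') : ¬ W ≤ W' :=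
  fun h => hne (Submodule.eq_of_le_of_finrank_eq h (by rw [hW, hW']))

lemma step1 (hn : 3 ≤ n) (hcard : 3 ≤ Cardinal.mk F ∨ 4 ≤ n)
    (A1 A2 : AntiFlag F n) (H : Submodule F (Fin n → F)) (hH : finrank F H = n - 1)
    (hH1 : H ≠ A1.hyp) (hH2 : H ≠ A2.hyp)
    (hcase : A1.pt = A2.pt ∨ A1.hyp = A2.hyp ∨ A1.pt ≤ A2.hyp ∨ A2.pt ≤ A1.hyp) :
    ∃ w, w ∈ H ∧ w ∉ A1.hyp ∧ w ∉ A2.hyp ∧ w ∉ A1.pt ∧ w ∉ A2.pt ∧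
      (w ∉ A1.pt ⊔ A2.pt ∨ 3 ≤ Cardinal.mk F) := by
  have hVn := finrank_fun F n
  have hHle1 : ¬ H ≤ A1.hyp := not_le_of_rank_hyper (by omega) hH A1.hyp_rank hH1
  have hHle2 : ¬ H ≤ A2.hyp := not_le_of_rank_hyper (by omega) hH A2.hyp_rank hH2
  have hHp1 : ¬ H ≤ A1.pt := by
    intro h
    have := Submodule.finrank_mono h
    rw [hH, A1.pt_rank] at this
    omega
  have hHp2 : ¬ H ≤ A2.pt := by
    intro h
    have := Submodule.finrank_mono h
    rw [hH, A2.pt_rank] at this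
    omega
  rcases hcard with hF | hn4
  · obtain ⟨c, hc0, hc1⟩ := exists_ne_zero_ne_one hF
    have hcF : ∃ c : F, c ≠ 0 ∧ c ≠ 1 := ⟨c, hc0, hc1⟩
    rcases hcase with hpp | hhh | h12 | h21
    · obtain ⟨w, hwH, hw1, hw2, hwp⟩ := avoid3 hcF hHle1 hHle2 hHp1
      exact ⟨w, hwH, hw1, hw2, hwp, fun h => hwp (by rwa [hpp]), Or.inr hF⟩
    · obtain ⟨w, hwH, hw1, hwp1, hwp2⟩ := avoid3 hcF hHle1 hHp1 hHp2
      exact ⟨w, hwH, hw1, fun h => hw1 (by rwa [hhh]), hwp1, hwp2, Or.inr hF⟩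
    · obtain ⟨w, hwH, hw1, hw2, hwp2⟩ := avoid3 hcF hHle1 hHle2 hHp2
      exact ⟨w, hwH, hw1, hw2, fun h => hw2 (h12 h), hwp2, Or.inr hF⟩
    · obtain ⟨w, hwH, hw1, hw2, hwp1⟩ := avoid3 hcF hHle1 hHle2 hHp1
      exact ⟨w, hwH, hw1, hw2, hwp1, fun h => hw1 (h21 h), Or.inr hF⟩
  · -- regime B : n ≥ 4
    have hP2 : finrank F ↥(A1.pt ⊔ A2.pt) ≤ 2 := by
      have h := Submodule.finrank_sup_add_finrank_inf_eq A1.pt A2.pt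
      have h1 := A1.pt_rank
      have h2 := A2.pt_rank
      omega
    have h1H : n - 2 ≤ finrank F ↥(A1.hyp ⊓ H) := by
      have h := Submodule.finrank_sup_add_finrank_inf_eq A1.hyp H
      have hs : finrank F ↥(A1.hyp ⊔ H) ≤ n := by
        have := Submodule.finrank_le (A1.hyp ⊔ H)
        omega
      have := A1.hyp_rank
      omega
    have h2H : n - 2 ≤ finrank F ↥(A2.hyp ⊓ H) := by
      have h := Submodule.finrank_sup_add_finrank_inf_eq A2.hyp H
      have hs : finrank F ↥(A2.hyp ⊔ H) ≤ n := by
        have := Submodule.finrank_le (A2.hyp ⊔ H)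
        omega
      have := A2.hyp_rank
      omega
    have hDrank : n - 3 ≤ finrank F ↥((A1.hyp ⊓ H) ⊓ (A2.hyp ⊓ H)) := by
      have h := Submodule.finrank_sup_add_finrank_inf_eq (A1.hyp ⊓ H) (A2.hyp ⊓ H)
      have hs : finrank F ↥((A1.hyp ⊓ H) ⊔ (A2.hyp ⊓ H)) ≤ n - 1 := by
        have := Submodule.finrank_mono (show (A1.hyp ⊓ H) ⊔ (A2.hyp ⊓ H) ≤ H from sup_le inf_le_right inf_le_right)
        omega
      omega
    obtain ⟨u0, hu0H, hu01, hu02⟩ := avoid2 hHle1 hHle2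
    by_cases hu0P : u0 ∈ A1.pt ⊔ A2.pt
    · obtain ⟨t, htD, ht0⟩ := exists_ne_zero_of_finrank_pos
        (T := (A1.hyp ⊓ H) ⊓ (A2.hyp ⊓ H)) (by omega)
      have ht1 : t ∈ A1.hyp := htD.1.1
      have ht2 : t ∈ A2.hyp := htD.2.1
      have htH : t ∈ H := htD.1.2
      by_cases hP1 : u0 + t ∈ A1.pt ⊔ A2.pt
      · -- t ∈ P ; use case analysis
        have htP : t ∈ A1.pt ⊔ A2.pt := by
          have := sub_mem hP1 hu0P
          simpa using this
        rcases hcase with hpp | hhh | h12 | h21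
        · exfalso
          have htp1 : t ∈ A1.pt := by
            have : A1.pt ⊔ A2.pt = A1.pt := by rw [← hpp, sup_idem]
            rwa [this] at htP
          exact A1.not_incident (mem_rank_one_le A1.pt_rank htp1 ht0 ht1)
        · -- second attempt with an element outside span {t}
          have hD2 : 2 ≤ finrank F ↥((A1.hyp ⊓ H) ⊓ (A2.hyp ⊓ H)) := by
            have heq : (A1.hyp ⊓ H) ⊓ (A2.hyp ⊓ H) = A1.hyp ⊓ H := by
              rw [← hhh, inf_idem]
            rw [heq]
            omega
          obtain ⟨t2, ht2D, ht2s⟩ : ∃ t2 ∈ (A1.hyp ⊓ H) ⊓ (A2.hyp ⊓ H),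
              t2 ∉ Submodule.span F {t} := by
            apply SetLike.not_le_iff_exists.1
            intro hle
            have h1 := Submodule.finrank_mono hle
            have h2 : finrank F (Submodule.span F {t}) = 1 := finrank_span_singleton ht0
            omega
          by_cases hP2' : u0 + t2 ∈ A1.pt ⊔ A2.pt
          · exfalso
            have ht2P : t2 ∈ A1.pt ⊔ A2.pt := by
              have := sub_mem hP2' hu0P
              simpa using this
            have hQ : ¬ (A1.pt ⊔ A2.pt) ≤ A1.hyp := by
              intro h
              exact A1.not_incident (le_trans le_sup_left h)
            have hQlt : (A1.pt ⊔ A2.pt) ⊓ A1.hyp < A1.pt ⊔ A2.pt :=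
              lt_of_le_of_ne inf_le_left (fun h => hQ (inf_eq_left.1 h))
            have hQrank : finrank F ↥((A1.pt ⊔ A2.pt) ⊓ A1.hyp) < finrank F ↥(A1.pt ⊔ A2.pt) :=
              Submodule.finrank_lt_finrank_of_lt hQlt
            have htQ : t ∈ (A1.pt ⊔ A2.pt) ⊓ A1.hyp := ⟨htP, ht1⟩
            have ht2Q : t2 ∈ (A1.pt ⊔ A2.pt) ⊓ A1.hyp := ⟨ht2P, ht2D.1.1⟩
            have hspan : Submodule.span F {t} = (A1.pt ⊔ A2.pt) ⊓ A1.hyp := by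
              apply Submodule.eq_of_le_of_finrank_eq
              · exact (span_singleton_le_iff_mem t _).2 htQ
              · rw [finrank_span_singleton ht0]
                have h1 : 1 ≤ finrank F ↥((A1.pt ⊔ A2.pt) ⊓ A1.hyp) := by
                  have := Submodule.finrank_mono ((span_singleton_le_iff_mem t _).2 htQ)
                  rw [finrank_span_singleton ht0] at this
                  omega
                omega
            exact ht2s (by rw [hspan]; exact ht2Q)
          · refine ⟨u0 + t2, add_mem hu0H ht2D.1.2, ?_, ?_,
              fun h => hP2' (Submodule.mem_sup_left h), fun h => hP2' (Submodule.mem_sup_right h), Or.inl hP2'⟩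
            · intro h
              exact hu01 (by simpa using sub_mem h ht2D.1.1)
            · intro h
              exact hu02 (by simpa using sub_mem h ht2D.2.1)
        · exfalso
          obtain ⟨x, hx, y, hy, hxy⟩ := Submodule.mem_sup.1 htP
          have hyH2 : y ∈ A2.hyp := by
            have hx2 : x ∈ A2.hyp := h12 hx
            have : t - x ∈ A2.hyp := sub_mem ht2 hx2
            rwa [← hxy, add_sub_cancel_left] at this
          have hy0 : y = 0 := by
            by_contra hy0
            exact A2.not_incident (mem_rank_one_le A2.pt_rank hy hy0 hyH2)
          have htp1 : t ∈ A1.pt := by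
            rw [← hxy, hy0, add_zero]
            exact hx
          exact A1.not_incident (mem_rank_one_le A1.pt_rank htp1 ht0 ht1)
        · exfalso
          obtain ⟨x, hx, y, hy, hxy⟩ := Submodule.mem_sup.1 htP
          have hxH1 : x ∈ A1.hyp := by
            have hy1 : y ∈ A1.hyp := h21 hy
            have : t - y ∈ A1.hyp := sub_mem ht1 hy1
            rwa [← hxy, add_sub_cancel_right] at this
          have hx0 : x = 0 := by
            by_contra hx0
            exact A1.not_incident (mem_rank_one_le A1.pt_rank hx hx0 hxH1)
          have htp2 : t ∈ A2.pt := by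
            rw [← hxy, hx0, zero_add]
            exact hy
          exact A2.not_incident (mem_rank_one_le A2.pt_rank htp2 ht0 ht2)
      · refine ⟨u0 + t, add_mem hu0H htH, ?_, ?_,
          fun h => hP1 (Submodule.mem_sup_left h), fun h => hP1 (Submodule.mem_sup_right h), Or.inl hP1⟩
        · intro h
          exact hu01 (by simpa using sub_mem h ht1)
        · intro h
          exact hu02 (by simpa using sub_mem h ht2)
    · exact ⟨u0, hu0H, hu01, hu02, fun h => hu0P (Submodule.mem_sup_left h),
        fun h => hu0P (Submodule.mem_sup_right h), Or.inl hu0P⟩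

lemma buildB (hn : 3 ≤ n) (A1 A2 : AntiFlag F n) (H : Submodule F (Fin n → F))
    {w : Fin n → F} {φ : Module.Dual F (Fin n → F)}
    (hwH : w ∈ H) (hw1 : w ∉ A1.hyp) (hw2 : w ∉ A2.hyp)
    (hwp1 : w ∉ A1.pt) (hwp2 : w ∉ A2.pt)
    (hφ1 : ¬ A1.pt ≤ LinearMap.ker φ) (hφ2 : ¬ A2.pt ≤ LinearMap.ker φ) (hφw : φ w ≠ 0)
    (hk1 : LinearMap.ker φ ≠ A1.hyp) (hk2 : LinearMap.ker φ ≠ A2.hyp) :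
    ∃ B : AntiFlag F n, adj4 A1 B ∧ adj4 A2 B ∧ B.pt ≤ H := by
  have hw0 : w ≠ 0 := fun h => hw1 (h ▸ A1.hyp.zero_mem)
  have hVn := finrank_fun F n
  refine ⟨⟨Submodule.span F {w}, LinearMap.ker φ, finrank_span_singleton hw0,
    by rw [finrank_ker_of_ne_zero hφw, hVn], ?_⟩, ⟨?_, ?_, ?_, hφ1, ?_⟩,
    ⟨?_, ?_, ?_, hφ2, ?_⟩, ?_⟩
  · intro h
    exact hφw (h (Submodule.mem_span_singleton_self w))
  · intro h
    exact hk1 (congrArg AntiFlag.hyp h).symm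
  · intro h
    exact hwp1 (h ▸ Submodule.mem_span_singleton_self w)
  · exact fun h => hk1 h.symm
  · intro h
    exact hw1 (h (Submodule.mem_span_singleton_self w))
  · intro h
    exact hk2 (congrArg AntiFlag.hyp h).symm
  · intro h
    exact hwp2 (h ▸ Submodule.mem_span_singleton_self w)
  · exact fun h => hk2 h.symm
  · intro h
    exact hw2 (h (Submodule.mem_span_singleton_self w))
  · exact (span_singleton_le_iff_mem w H).2 hwH

end Stmt5Aux

open Stmt5Aux Module Submodule in
theorem stmt5 (hn : 3 ≤ n) (hcard : 3 ≤ Cardinal.mk F ∨ 4 ≤ n)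
    (A1 A2 : AntiFlag F n) (hne : A1 ≠ A2) (hnot4 : ¬ adj4 A1 A2)
    (H : Submodule F (Fin n → F)) (hH : Module.finrank F H = n - 1)
    (hH1 : H ≠ A1.hyp) (hH2 : H ≠ A2.hyp) :
    ∃ B : AntiFlag F n, adj4 A1 B ∧ adj4 A2 B ∧ B.pt ≤ H := by
  classical
  have hVn := finrank_fun F n
  obtain ⟨v1, hv10, hp1⟩ := exists_span_rep A1.pt_rank
  obtain ⟨v2, hv20, hp2⟩ := exists_span_rep A2.pt_rank
  have hv1p : v1 ∈ A1.pt := by rw [hp1]; exact Submodule.mem_span_singleton_self v1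
  have hv2p : v2 ∈ A2.pt := by rw [hp2]; exact Submodule.mem_span_singleton_self v2
  obtain ⟨ψ1, hψ10, hkψ1⟩ := hyperplane_exists_ker (W := A1.hyp)
    (by rw [hVn]; exact A1.hyp_rank) (by rw [hVn]; omega)
  obtain ⟨ψ2, hψ20, hkψ2⟩ := hyperplane_exists_ker (W := A2.hyp)
    (by rw [hVn]; exact A2.hyp_rank) (by rw [hVn]; omega)
  have hcase : A1.pt = A2.pt ∨ A1.hyp = A2.hyp ∨ A1.pt ≤ A2.hyp ∨ A2.pt ≤ A1.hyp := by
    by_contra h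
    push_neg at h
    exact hnot4 ⟨hne, h.1, h.2.1, h.2.2.1, h.2.2.2⟩
  obtain ⟨w, hwH, hw1, hw2, hwp1, hwp2, hextra⟩ :=
    step1 hn hcard A1 A2 H hH hH1 hH2 hcase
  have hstep2 : ∃ φ : Module.Dual F (Fin n → F), φ v1 ≠ 0 ∧ φ v2 ≠ 0 ∧ φ w ≠ 0 ∧
      φ ∉ Submodule.span F {ψ1} ∧ φ ∉ Submodule.span F {ψ2} := by
    by_cases hpp : A1.pt = A2.pt
    · -- case (i)
      have hw_v1 : w ∉ Submodule.span F {v1} := by rw [← hp1]; exact hwp1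
      have h1c : v1 ∉ Submodule.span F {w} := by
        intro hmem
        obtain ⟨s, hs⟩ := Submodule.mem_span_singleton.1 hmem
        have hs0 : s ≠ 0 := fun h0 => hv10 (by rw [← hs, h0, zero_smul])
        exact hw_v1 (Submodule.mem_span_singleton.2
          ⟨s⁻¹, by rw [← hs, smul_smul, inv_mul_cancel₀ hs0, one_smul]⟩)
      have hroom : (∃ c : F, c ≠ 0 ∧ c ≠ 1) ∨ 4 ≤ finrank F (Fin n → F) := by
        rcases hcard with hF | h4
        · exact Or.inl (exists_ne_zero_ne_one hF)
        · exact Or.inr (by rw [hVn]; exact h4)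
      obtain ⟨φ, hφv1, hφw, hs1, hs2⟩ := step2c ψ1 ψ2 h1c hw_v1 hroom
        (by rw [hVn]; exact hn)
      have hv2s : v2 ∈ Submodule.span F {v1} := by rw [← hp1, hpp]; exact hv2p
      obtain ⟨k, hk⟩ := Submodule.mem_span_singleton.1 hv2s
      have hk0 : k ≠ 0 := fun h0 => hv20 (by rw [← hk, h0, zero_smul])
      refine ⟨φ, hφv1, ?_, hφw, hs1, hs2⟩
      rw [← hk, map_smul, smul_eq_mul]
      exact mul_ne_zero hk0 hφv1
    · by_cases hwP : w ∈ A1.pt ⊔ A2.pt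
      · -- case (b) : w in the span of the two points
        have hF : ∃ c : F, c ≠ 0 ∧ c ≠ 1 := by
          rcases hextra with h | h
          · exact absurd hwP h
          · exact exists_ne_zero_ne_one h
        obtain ⟨x, hx, y, hy, hxy⟩ := Submodule.mem_sup.1 hwP
        rw [hp1] at hx
        rw [hp2] at hy
        obtain ⟨a, hax⟩ := Submodule.mem_span_singleton.1 hx
        obtain ⟨b, hby⟩ := Submodule.mem_span_singleton.1 hy
        have hw_eq : w = a • v1 + b • v2 := by rw [hax, hby, hxy]
        have ha : a ≠ 0 := by
          intro h0
          apply hwp2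
          rw [hp2]
          exact Submodule.mem_span_singleton.2
            ⟨b, by rw [hw_eq, h0, zero_smul, zero_add]⟩
        have hb : b ≠ 0 := by
          intro h0
          apply hwp1
          rw [hp1]
          exact Submodule.mem_span_singleton.2
            ⟨a, by rw [hw_eq, h0, zero_smul, add_zero]⟩
        have h21 : v2 ∉ Submodule.span F {v1} := by
          intro hmem
          exact hpp (hp1.trans
            (((span_singleton_eq_of_mem hv20 hmem).symm).trans hp2.symm))
        have h12 : v1 ∉ Submodule.span F {v2} := by
          intro hmem
          exact hpp (hp1.trans
            ((span_singleton_eq_of_mem hv10 hmem).trans hp2.symm))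
        exact step2b ψ1 ψ2 hw_eq ha hb h12 h21 hF (by rw [hVn]; exact hn)
      · -- case (a) : independent triple
        have hPspan : Submodule.span F {v1, v2} = A1.pt ⊔ A2.pt := by
          rw [show ({v1, v2} : Set (Fin n → F)) = insert v1 {v2} from rfl,
            Submodule.span_insert, ← hp1, ← hp2]
        have hw3 : w ∉ Submodule.span F {v1, v2} := by rw [hPspan]; exact hwP
        have h1 : v1 ∉ Submodule.span F {v2, w} := by
          intro hmem
          obtain ⟨s, t, hst⟩ := Submodule.mem_span_pair.1 hmem
          by_cases ht : t = 0
          · rw [ht, zero_smul, add_zero] at hst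
            exact hpp (hp1.trans
              (((span_singleton_eq_of_mem hv10
                (Submodule.mem_span_singleton.2 ⟨s, hst⟩)).trans hp2.symm)))
          · apply hw3
            refine Submodule.mem_span_pair.2 ⟨t⁻¹, -(t⁻¹ * s), ?_⟩
            have hw' : t • w = v1 - s • v2 := by rw [← hst]; abel
            have h2 : t⁻¹ • (t • w) = w := by
              rw [smul_smul, inv_mul_cancel₀ ht, one_smul]
            rw [← h2, hw', smul_sub, smul_smul, neg_smul, ← sub_eq_add_neg]
        have h2 : v2 ∉ Submodule.span F {v1, w} := by
          intro hmem
          obtain ⟨s, t, hst⟩ := Submodule.mem_span_pair.1 hmem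
          by_cases ht : t = 0
          · rw [ht, zero_smul, add_zero] at hst
            exact hpp (hp1.trans
              ((((span_singleton_eq_of_mem hv20
                (Submodule.mem_span_singleton.2 ⟨s, hst⟩)).symm).trans hp2.symm)))
          · apply hw3
            have hw' : t • w = v2 - s • v1 := by rw [← hst]; abel
            refine Submodule.mem_span_pair.2 ⟨-(t⁻¹ * s), t⁻¹, ?_⟩
            have h2' : t⁻¹ • (t • w) = w := by
              rw [smul_smul, inv_mul_cancel₀ ht, one_smul]
            rw [← h2', hw', smul_sub, smul_smul, neg_smul, add_comm, ← sub_eq_add_neg]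
        have hbad : (∃ c : F, c ≠ 0 ∧ c ≠ 1) ∨
            (4 ≤ finrank F (Fin n → F) ∧
              (Submodule.span F {ψ1} = Submodule.span F {ψ2} ∨
                ψ2 v1 = 0 ∨ ψ1 v2 = 0)) := by
          rcases hcard with hF | hn4
          · exact Or.inl (exists_ne_zero_ne_one hF)
          · refine Or.inr ⟨by rw [hVn]; exact hn4, ?_⟩
            rcases hcase with hpp' | hhh | h12 | h21
            · exact absurd hpp' hpp
            · left
              apply le_antisymm
              · exact (span_singleton_le_iff_mem _ _).2
                  (ker_eq_imp_mem_span hψ20 (by rw [hkψ1, hkψ2, hhh]))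
              · exact (span_singleton_le_iff_mem _ _).2
                  (ker_eq_imp_mem_span hψ10 (by rw [hkψ1, hkψ2, hhh]))
            · right; left
              have : v1 ∈ A2.hyp := h12 hv1p
              rw [← hkψ2] at this
              exact this
            · right; right
              have : v2 ∈ A1.hyp := h21 hv2p
              rw [← hkψ1] at this
              exact this
        exact step2a hw3 h1 h2 hbad
  obtain ⟨φ, hφv1, hφv2, hφw, hsp1, hsp2⟩ := hstep2
  exact buildB hn A1 A2 H hwH hw1 hw2 hwp1 hwp2
    (fun hle => hφv1 (LinearMap.mem_ker.1 (hle hv1p)))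
    (fun hle => hφv2 (LinearMap.mem_ker.1 (hle hv2p)))
    hφw
    (fun h => hsp1 (ker_eq_imp_mem_span hψ10 (by rw [h, hkψ1])))
    (fun h => hsp2 (ker_eq_imp_mem_span hψ20 (by rw [h, hkψ2])))
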